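/- Let T be an m × m Hermitian matrix, let j ∈ {1,...,m}, and for λ ∈ ℝ let T_λ = T + λ 𝒫_j, where 𝒫_j is the orthogonal projection onto the span of the j-th standard basis vector δ_j (i.e., the matrix with a single 1 in position (j,j)). Then for every f ∈ C¹(ℝ) (f differentiable with continuous derivative), the function λ ↦ Tr f(T_λ) is differentiable on ℝ and its derivative at λ equals ⟨f'(T_λ) δ_j, δ_j⟩, the (j,j) entry of f'(T_λ). -/

import Mathlib

noncomputable section

/-- Continuous functional calculus for Hermitian matrices:
`f(A) = Σ_i f(λ_i) ψ_i ψ_i^*` in an orthonormal eigenbasis (junk value `0` if `A` is not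
Hermitian). -/
def matFCC {N : Type*} [Fintype N] [DecidableEq N] (f : ℝ → ℝ) (A : Matrix N N ℂ) :
    Matrix N N ℂ :=
  if hA : A.IsHermitian then
    Matrix.of fun n m =>
      ∑ i, (f (hA.eigenvalues i) : ℂ) * hA.eigenvectorBasis i n * star (hA.eigenvectorBasis i m)
  else 0

open Matrix Polynomial

section Aux

variable {N : Type*} [Fintype N] [DecidableEq N]

lemma matFCC_eq (f : ℝ → ℝ) {A : Matrix N N ℂ}
    (hA : A.IsHermitian) : matFCC f A = hA.cfc f := by
  rw [matFCC, dif_pos hA, Matrix.IsHermitian.cfc, Unitary.conjStarAlgAut_apply]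
  ext n m
  simp only [Matrix.mul_apply, Matrix.of_apply, Matrix.diagonal_apply, Function.comp_apply,
    mul_ite, mul_zero, Finset.sum_ite_eq, Finset.sum_ite_eq', Finset.mem_univ, if_true,
    Matrix.star_apply, Matrix.IsHermitian.eigenvectorUnitary_apply,
    ite_mul, zero_mul]
  refine Finset.sum_congr rfl fun i _ => ?_
  exact congrArg (· * star (hA.eigenvectorBasis i m)) (mul_comm _ _)

lemma matFCC_apply (f : ℝ → ℝ) {A : Matrix N N ℂ}
    (hA : A.IsHermitian) (j : N) :
    matFCC f A j j
      = ((∑ i, f (hA.eigenvalues i) * Complex.normSq (hA.eigenvectorBasis i j) : ℝ) : ℂ) := by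
  rw [matFCC, dif_pos hA]
  push_cast
  refine Finset.sum_congr rfl fun i _ => ?_
  rw [mul_assoc]
  congr 1
  rw [← Complex.mul_conj]
  rfl

lemma matFCC_poly (q : ℝ[X]) {A : Matrix N N ℂ}
    (hA : A.IsHermitian) : matFCC (fun x => q.eval x) A = Polynomial.aeval A q := by
  rw [matFCC_eq _ hA, ← hA.cfc_eq]
  convert cfc_polynomial q A hA

lemma matFCC_one {A : Matrix N N ℂ}
    (hA : A.IsHermitian) : matFCC (fun _ => 1) A = 1 := by
  have := matFCC_poly (1 : ℝ[X]) hA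
  simpa using this

lemma weights_sum {A : Matrix N N ℂ}
    (hA : A.IsHermitian) (j : N) :
    ∑ i, Complex.normSq (hA.eigenvectorBasis i j) = 1 := by
  have h : matFCC (fun _ => (1:ℝ)) A j j = (1 : Matrix N N ℂ) j j := by rw [matFCC_one hA]
  rw [matFCC_apply _ hA j, Matrix.one_apply_eq] at h
  simp only [one_mul] at h
  exact_mod_cast h

lemma trace_matFCC (f : ℝ → ℝ) {A : Matrix N N ℂ}
    (hA : A.IsHermitian) :
    (matFCC f A).trace = ((∑ i, f (hA.eigenvalues i) : ℝ) : ℂ) := by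
  rw [matFCC_eq f hA, Matrix.IsHermitian.cfc, Unitary.conjStarAlgAut_apply]
  rw [Matrix.trace_mul_cycle]
  rw [show (star hA.eigenvectorUnitary : Matrix N N ℂ) * (hA.eigenvectorUnitary : Matrix N N ℂ)
    = 1 from Unitary.star_mul_self_of_mem (SetLike.coe_mem _), one_mul, Matrix.trace_diagonal]
  push_cast
  rfl

lemma trace_mul_single (M : Matrix N N ℂ) (j : N) :
    (M * Matrix.single j j 1).trace = M j j := by
  simp [Matrix.trace, Matrix.diag, Matrix.mul_apply, Matrix.single, ite_and,
    Finset.sum_ite_eq, Finset.sum_ite_eq']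

def entSum (A : Matrix N N ℂ) : ℝ := ∑ n, ∑ m, ‖A n m‖

lemma entSum_nonneg (A : Matrix N N ℂ) : 0 ≤ entSum A :=
  Finset.sum_nonneg fun _ _ => Finset.sum_nonneg fun _ _ => norm_nonneg _

lemma eig_abs_le {A : Matrix N N ℂ}
    (hA : A.IsHermitian) (i : N) : |hA.eigenvalues i| ≤ entSum A := by
  set ψ : N → ℂ := ⇑(hA.eigenvectorBasis i) with hψ
  have hψA : A *ᵥ ψ = hA.eigenvalues i • ψ := hA.mulVec_eigenvectorBasis i
  obtain ⟨n, -, hn⟩ := Finset.exists_max_image Finset.univ (fun k => ‖ψ k‖)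
    ⟨i, Finset.mem_univ i⟩
  have hn' : ∀ k, ‖ψ k‖ ≤ ‖ψ n‖ := fun k => hn k (Finset.mem_univ k)
  have hnorm : ‖hA.eigenvectorBasis i‖ = 1 := hA.eigenvectorBasis.orthonormal.1 i
  have hn0 : 0 < ‖ψ n‖ := by
    rcases (norm_nonneg (ψ n)).lt_or_eq with h | h
    · exact h
    · exfalso
      have hz : ∀ k, ψ k = 0 := fun k => by
        have := hn' k
        rw [← h] at this
        exact norm_eq_zero.mp (le_antisymm this (norm_nonneg _))
      have hz' : ∀ k, (hA.eigenvectorBasis i) k = 0 := fun k => hz k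
      rw [EuclideanSpace.norm_eq] at hnorm
      simp [hz'] at hnorm
  have key : |hA.eigenvalues i| * ‖ψ n‖
      ≤ (∑ m, ‖A n m‖) * ‖ψ n‖ := by
    have h1 : ‖(A *ᵥ ψ) n‖ = |hA.eigenvalues i| * ‖ψ n‖ := by
      rw [hψA]
      simp only [Pi.smul_apply, Complex.real_smul]
      rw [norm_mul, Complex.norm_real, Real.norm_eq_abs]
    calc |hA.eigenvalues i| * ‖ψ n‖ = ‖(A *ᵥ ψ) n‖ := h1.symm
    _ ≤ ∑ m, ‖A n m * ψ m‖ := by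
        rw [Matrix.mulVec]; exact norm_sum_le _ _
    _ ≤ ∑ m, ‖A n m‖ * ‖ψ n‖ := by
        refine Finset.sum_le_sum fun m _ => ?_
        rw [norm_mul]
        exact mul_le_mul_of_nonneg_left (hn' m) (norm_nonneg _)
    _ = (∑ m, ‖A n m‖) * ‖ψ n‖ := by rw [Finset.sum_mul]
  have h2 : |hA.eigenvalues i| ≤ ∑ m, ‖A n m‖ :=
    le_of_mul_le_mul_right key hn0
  refine h2.trans ?_
  exact Finset.single_le_sum (f := fun n => ∑ m, ‖A n m‖)
    (fun k _ => Finset.sum_nonneg fun _ _ => norm_nonneg _) (Finset.mem_univ n)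

lemma entSum_line_le (T P : Matrix N N ℂ) (t : ℝ) :
    entSum (T + (t : ℂ) • P) ≤ entSum T + |t| * entSum P := by
  have h : ∀ n m : N, ‖(T + (t:ℂ) • P) n m‖
      ≤ ‖T n m‖ + |t| * ‖P n m‖ := by
    intro n m
    simp only [Matrix.add_apply, Matrix.smul_apply, smul_eq_mul]
    refine (norm_add_le _ _).trans ?_
    rw [norm_mul, Complex.norm_real, Real.norm_eq_abs]
  calc entSum (T + (t:ℂ) • P)
      ≤ ∑ n, ∑ m, (‖T n m‖ + |t| * ‖P n m‖) :=
        Finset.sum_le_sum fun n _ => Finset.sum_le_sum fun m _ => h n m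
  _ = entSum T + |t| * entSum P := by
      rw [entSum, entSum]
      simp [Finset.sum_add_distrib, Finset.mul_sum]

end Aux

attribute [local instance] Matrix.linftyOpNormedRing Matrix.linftyOpNormedAlgebra

section Deriv

variable {N : Type*} [Fintype N] [DecidableEq N]

def trCLM (N : Type*) [Fintype N] [DecidableEq N] : Matrix N N ℂ →L[ℝ] ℂ :=
  LinearMap.toContinuousLinearMap (Matrix.traceLinearMap N ℝ ℂ)

lemma trCLM_apply (M : Matrix N N ℂ) : trCLM N M = M.trace := rfl

lemma hasDerivAt_matline (T P : Matrix N N ℂ) (l : ℝ) :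
    HasDerivAt (fun t : ℝ => T + (t : ℂ) • P) P l := by
  have h : ∀ t : ℝ, (t:ℂ) • P = t • P := fun t => by
    rw [show ((t:ℂ)) = algebraMap ℝ ℂ t from rfl, algebraMap_smul]
  simp only [h]
  exact (((hasDerivAt_id l).smul_const P).const_add T).congr_deriv (one_smul ℝ P)

lemma pow_hasDerivAt {F : ℝ → Matrix N N ℂ} {Q : Matrix N N ℂ} {l : ℝ}
    (hF : HasDerivAt F Q l) (n : ℕ) :
    HasDerivAt (fun t => F t ^ n)
      (∑ k ∈ Finset.range n, F l ^ k * Q * F l ^ (n - 1 - k)) l := by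
  induction n with
  | zero =>
    simp only [pow_zero, Finset.range_zero, Finset.sum_empty]
    exact hasDerivAt_const l _
  | succ n ih =>
    have h := ih.mul hF
    simp only [pow_succ]
    refine h.congr_deriv ?_
    rw [Finset.sum_range_succ, Finset.sum_mul]
    congr 1
    · refine Finset.sum_congr rfl fun k hk => ?_
      rw [Finset.mem_range] at hk
      have e : n + 1 - 1 - k = (n - 1 - k) + 1 := by omega
      rw [e, pow_succ, ← mul_assoc]
    · simp

lemma trace_pow_hasDerivAt {F : ℝ → Matrix N N ℂ} {Q : Matrix N N ℂ} {l : ℝ}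
    (hF : HasDerivAt F Q l) (n : ℕ) :
    HasDerivAt (fun t => (F t ^ n).trace) ((n : ℂ) * (F l ^ (n - 1) * Q).trace) l := by
  have h := ((trCLM N).hasFDerivAt).comp_hasDerivAt l (pow_hasDerivAt hF n)
  have e : trCLM N (∑ k ∈ Finset.range n, F l ^ k * Q * F l ^ (n - 1 - k))
      = (n : ℂ) * (F l ^ (n - 1) * Q).trace := by
    rw [map_sum]
    have : ∀ k ∈ Finset.range n,
        trCLM N (F l ^ k * Q * F l ^ (n - 1 - k)) = (F l ^ (n - 1) * Q).trace := by
      intro k hk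
      rw [Finset.mem_range] at hk
      rw [trCLM_apply, Matrix.trace_mul_cycle, ← pow_add]
      have e2 : n - 1 - k + k = n - 1 := by omega
      rw [e2]
    rw [Finset.sum_congr rfl this, Finset.sum_const, Finset.card_range, nsmul_eq_mul]
  exact h.congr_deriv e

lemma trace_aeval_hasDerivAt {F : ℝ → Matrix N N ℂ} {Q : Matrix N N ℂ} {l : ℝ}
    (hF : HasDerivAt F Q l) (q : ℝ[X]) :
    HasDerivAt (fun t => (Polynomial.aeval (F t) q).trace)
      ((Polynomial.aeval (F l) q.derivative * Q).trace) l := by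
  have hrepr : ∀ M : Matrix N N ℂ, (Polynomial.aeval M q).trace
      = ∑ i ∈ Finset.range (q.natDegree + 1), q.coeff i • (M ^ i).trace := by
    intro M
    rw [Polynomial.aeval_eq_sum_range, Matrix.trace_sum]
    exact Finset.sum_congr rfl fun i _ => Matrix.trace_smul _ _
  have hd : HasDerivAt (fun t => (Polynomial.aeval (F t) q).trace)
      (∑ i ∈ Finset.range (q.natDegree + 1),
        q.coeff i • ((i : ℂ) * (F l ^ (i - 1) * Q).trace)) l := by
    simp only [hrepr]
    exact HasDerivAt.fun_sum fun i _ => (trace_pow_hasDerivAt hF i).const_smul (q.coeff i)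
  convert hd using 1
  have hdeg : q.derivative.natDegree < q.natDegree + 1 :=
    lt_of_le_of_lt q.natDegree_derivative_le (Nat.lt_succ_of_le (Nat.sub_le _ _))
  rw [Polynomial.aeval_eq_sum_range' hdeg, Finset.sum_mul, Matrix.trace_sum]
  have hL : ∀ i ∈ Finset.range (q.natDegree + 1),
      (q.derivative.coeff i • F l ^ i * Q).trace
        = (q.coeff (i + 1) * (i + 1)) • (F l ^ i * Q).trace := fun i _ => by
    rw [Polynomial.coeff_derivative, smul_mul_assoc, Matrix.trace_smul]
  rw [Finset.sum_congr rfl hL]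
  conv_lhs => rw [Finset.sum_range_succ]
  conv_rhs => rw [Finset.sum_range_succ']
  rw [Polynomial.coeff_eq_zero_of_natDegree_lt (Nat.lt_succ_self _)]
  simp only [zero_mul, zero_smul, add_zero, Nat.cast_zero, mul_zero, smul_zero, zero_add]
  refine Finset.sum_congr rfl fun i _ => ?_
  simp only [Nat.add_sub_cancel, Complex.real_smul]
  push_cast
  ring

end Deriv

def antid (p : ℝ[X]) : ℝ[X] :=
  ∑ n ∈ Finset.range (p.natDegree + 1), C (p.coeff n / (n + 1)) * X ^ (n + 1)

lemma antid_derivative (p : ℝ[X]) : (antid p).derivative = p := by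
  rw [antid, derivative_sum]
  have h : ∀ n ∈ Finset.range (p.natDegree + 1),
      derivative (C (p.coeff n / (n + 1)) * X ^ (n + 1)) = C (p.coeff n) * X ^ n := by
    intro n _
    rw [derivative_C_mul_X_pow]
    have e1 : p.coeff n / ((n : ℝ) + 1) * ((n : ℕ) + 1 : ℕ) = p.coeff n := by
      push_cast
      rw [div_mul_cancel₀]
      positivity
    rw [Nat.add_sub_cancel, e1]
  rw [Finset.sum_congr rfl h]
  conv_rhs => rw [p.as_sum_range' (p.natDegree + 1) (Nat.lt_succ_self _)]
  exact Finset.sum_congr rfl fun n _ => C_mul_X_pow_eq_monomial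

lemma antid_eval_zero (p : ℝ[X]) : (antid p).eval 0 = 0 := by
  rw [antid]
  simp [eval_finset_sum]

/-- derivative of the trace of `f(T + λ𝒫_j)` under a rank-one diagonal
perturbation: `d/dλ Tr f(T_λ) = (f'(T_λ))_{jj}`. -/
theorem hasDerivAt_trace_fc (m : ℕ) (T : Matrix (Fin m) (Fin m) ℂ) (hT : T.IsHermitian)
    (j : Fin m) (f : ℝ → ℝ) (hf : Differentiable ℝ f) (hf' : Continuous (deriv f)) (l : ℝ) :
    HasDerivAt
      (fun t : ℝ => (matFCC f (T + (t : ℂ) • Matrix.single j j (1 : ℂ))).trace)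
      ((matFCC (deriv f) (T + (l : ℂ) • Matrix.single j j (1 : ℂ))) j j) l := by
  set P : Matrix (Fin m) (Fin m) ℂ := Matrix.single j j 1 with hPdef
  set A : ℝ → Matrix (Fin m) (Fin m) ℂ := fun t => T + (t : ℂ) • P with hAdef
  have hP : P.IsHermitian := by
    rw [Matrix.IsHermitian, hPdef]
    ext a b
    by_cases h1 : j = a <;> by_cases h2 : j = b <;>
      simp [Matrix.conjTranspose_apply, Matrix.single, h1, h2]
  have hA : ∀ t : ℝ, (A t).IsHermitian := fun t => by
    refine hT.add ?_
    rw [Matrix.IsHermitian, Matrix.conjTranspose_smul, hP.eq]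
    rw [Complex.star_def, Complex.conj_ofReal]
  set d := deriv f with hd
  set K := entSum T + (|l| + 1) * entSum P with hK
  have hK0 : 0 ≤ K :=
    add_nonneg (entSum_nonneg T) (mul_nonneg (by positivity) (entSum_nonneg P))
  have hEig : ∀ t ∈ Metric.ball l 1, ∀ i, (hA t).eigenvalues i ∈ Set.Icc (-K) K := by
    intro t ht i
    have h1 : |(hA t).eigenvalues i| ≤ entSum (A t) := eig_abs_le (hA t) i
    have ht' : |t| ≤ |l| + 1 := by
      rw [Metric.mem_ball, Real.dist_eq] at ht
      calc |t| = |l + (t - l)| := by ring_nf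
      _ ≤ |l| + |t - l| := abs_add_le _ _
      _ ≤ |l| + 1 := by linarith
    have h2 : entSum (A t) ≤ K := by
      refine (entSum_line_le T P t).trans ?_
      rw [hK]
      have := mul_le_mul_of_nonneg_right ht' (entSum_nonneg P)
      linarith
    exact abs_le.mp (h1.trans h2)
  -- Weierstrass approximation of the derivative
  have hch : ∀ n : ℕ, ∃ p : ℝ[X], ∀ x ∈ Set.Icc (-K) K, |p.eval x - d x| < 1/(n+1) := fun n =>
    exists_polynomial_near_of_continuousOn (-K) K d hf'.continuousOn _ (by positivity)
  choose p hp using hch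
  set q : ℕ → ℝ[X] := fun n => antid (p n) + C (f 0) with hq
  have hqd : ∀ n, (q n).derivative = p n := fun n => by
    rw [hq]
    simp [antid_derivative]
  -- derivatives of the approximants
  have hstep1 : ∀ (n : ℕ) (t : ℝ), HasDerivAt (fun s => (Polynomial.aeval (A s) (q n)).trace)
      ((matFCC (fun x => (p n).eval x) (A t)) j j) t := by
    intro n t
    have h := trace_aeval_hasDerivAt (hasDerivAt_matline T P t) (q n)
    rw [hqd n, hPdef, _root_.trace_mul_single, ← hPdef, ← matFCC_poly (p n) (hA t)] at h
    exact h
  -- uniform convergence of the derivatives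
  have hbound1 : ∀ (n : ℕ) (t : ℝ), t ∈ Metric.ball l 1 →
      dist ((matFCC d (A t)) j j) ((matFCC (fun x => (p n).eval x) (A t)) j j) ≤ 1/(n+1) := by
    intro n t ht
    rw [matFCC_apply d (hA t) j, matFCC_apply _ (hA t) j, Complex.dist_eq,
      ← Complex.ofReal_sub, Complex.norm_real, Real.norm_eq_abs, ← Finset.sum_sub_distrib]
    calc |∑ i, (d ((hA t).eigenvalues i) * Complex.normSq ((hA t).eigenvectorBasis i j)
          - (p n).eval ((hA t).eigenvalues i) * Complex.normSq ((hA t).eigenvectorBasis i j))|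
        ≤ ∑ i, |d ((hA t).eigenvalues i) * Complex.normSq ((hA t).eigenvectorBasis i j)
          - (p n).eval ((hA t).eigenvalues i) * Complex.normSq ((hA t).eigenvectorBasis i j)| :=
          Finset.abs_sum_le_sum_abs _ _
    _ ≤ ∑ i, (1/(n+1)) * Complex.normSq ((hA t).eigenvectorBasis i j) := by
        refine Finset.sum_le_sum fun i _ => ?_
        rw [← sub_mul, abs_mul, abs_of_nonneg (Complex.normSq_nonneg _)]
        refine mul_le_mul_of_nonneg_right ?_ (Complex.normSq_nonneg _)
        rw [abs_sub_comm]
        exact (hp n _ (hEig t ht i)).le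
    _ = 1/(n+1) := by
        rw [← Finset.mul_sum, weights_sum (hA t) j, mul_one]
  have hunif : TendstoUniformlyOn (fun (n : ℕ) (t : ℝ) => (matFCC (fun x => (p n).eval x) (A t)) j j)
      (fun t => (matFCC d (A t)) j j) Filter.atTop (Metric.ball l 1) := by
    rw [Metric.tendstoUniformlyOn_iff]
    intro ε hε
    obtain ⟨Nn, hNn⟩ := exists_nat_one_div_lt hε
    refine Filter.eventually_atTop.mpr ⟨Nn, fun n hn t ht => ?_⟩
    calc dist ((matFCC d (A t)) j j) ((matFCC (fun x => (p n).eval x) (A t)) j j)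
        ≤ 1/(n+1) := hbound1 n t ht
    _ ≤ 1/(Nn+1) := by
        apply one_div_le_one_div_of_le
        · positivity
        · exact_mod_cast Nat.succ_le_succ hn
    _ < ε := hNn
  -- pointwise convergence of the functions
  have hqf : ∀ (n : ℕ) (x : ℝ), x ∈ Set.Icc (-K) K →
      |(q n).eval x - f x| ≤ (1/(n+1)) * K := by
    intro n x hx
    set φ : ℝ → ℝ := fun y => (q n).eval y - f y with hφ
    have hder : ∀ y ∈ Set.Icc (-K) K,
        HasDerivWithinAt φ ((p n).eval y - d y) (Set.Icc (-K) K) y := by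
      intro y _
      have h1 : HasDerivAt (fun y => (q n).eval y) ((p n).eval y) y := by
        have := (q n).hasDerivAt y
        rwa [hqd n] at this
      exact (h1.sub (hf y).hasDerivAt).hasDerivWithinAt
    have hboundφ : ∀ y ∈ Set.Icc (-K) K, ‖(p n).eval y - d y‖ ≤ 1/(n+1) := fun y hy => by
      rw [Real.norm_eq_abs]
      exact (hp n y hy).le
    have h0 : (0:ℝ) ∈ Set.Icc (-K) K := by
      constructor <;> linarith
    have hmv := (convex_Icc (-K) K).norm_image_sub_le_of_norm_hasDerivWithin_le
      hder hboundφ h0 hx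
    have hφ0 : φ 0 = 0 := by
      simp [hφ, hq, antid_eval_zero]
    rw [hφ0, sub_zero, sub_zero, Real.norm_eq_abs] at hmv
    refine hmv.trans ?_
    refine mul_le_mul_of_nonneg_left ?_ (by positivity)
    rw [Real.norm_eq_abs]
    exact abs_le.mpr hx
  have hptw : ∀ t ∈ Metric.ball l 1,
      Filter.Tendsto (fun n => (Polynomial.aeval (A t) (q n)).trace)
        Filter.atTop (nhds ((matFCC f (A t)).trace)) := by
    intro t ht
    have hb : ∀ n : ℕ, dist ((Polynomial.aeval (A t) (q n)).trace) ((matFCC f (A t)).trace)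
        ≤ (m : ℝ) * ((1/(n+1)) * K) := by
      intro n
      rw [← matFCC_poly (q n) (hA t), trace_matFCC _ (hA t), trace_matFCC f (hA t),
        Complex.dist_eq, ← Complex.ofReal_sub, Complex.norm_real, Real.norm_eq_abs, ← Finset.sum_sub_distrib]
      calc |∑ i, ((q n).eval ((hA t).eigenvalues i) - f ((hA t).eigenvalues i))|
          ≤ ∑ i, |(q n).eval ((hA t).eigenvalues i) - f ((hA t).eigenvalues i)| :=
            Finset.abs_sum_le_sum_abs _ _
      _ ≤ ∑ _i : Fin m, (1/(n+1)) * K :=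
            Finset.sum_le_sum fun i _ => hqf n _ (hEig t ht i)
      _ = (m : ℝ) * ((1/(n+1)) * K) := by
            rw [Finset.sum_const, Finset.card_univ, Fintype.card_fin, nsmul_eq_mul]
    have hlim : Filter.Tendsto (fun n : ℕ => (m:ℝ) * ((1/(n+1)) * K))
        Filter.atTop (nhds 0) := by
      have h1 : Filter.Tendsto (fun n : ℕ => 1/((n:ℝ)+1)) Filter.atTop (nhds 0) :=
        tendsto_one_div_add_atTop_nhds_zero_nat
      have := (h1.mul_const K).const_mul (m:ℝ)
      simpa using this
    rw [tendsto_iff_dist_tendsto_zero]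
    exact squeeze_zero (fun n => dist_nonneg) hb hlim
  exact hasDerivAt_of_tendstoUniformlyOn Metric.isOpen_ball hunif
    (Filter.Eventually.of_forall fun n t _ => hstep1 n t)
    hptw (Metric.mem_ball_self one_pos)

end
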